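/- Let h(r)=f(r)+r g(r) with f Lipschitz and g bounded Lipschitz. If |ε|_∞ ≤ 1/2 then (R_ε − R̃_ε)h(r) = f_ε(r) + r g_ε(r) with |f_ε|_∞ ≤ C(Lip(f)+|g|_∞)|ε|_∞^2 and |g_ε|_∞ ≤ C Lip(g)|ε|_∞^2, for a universal constant C. -/

import Mathlib

open Finset Filter Topology

namespace Stmt15Aux

/-- Quadratic bound on the error in linearizing a product. -/
lemma prod_linearize_bound (E : ℝ) (hE0 : 0 ≤ E) (hE1 : E ≤ 1/2) (y : ℕ → ℝ)
    (hy : ∀ i, |y i| ≤ E) (n : ℕ) :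
    |∏ i ∈ Finset.range n, (1 + y i) - (1 + ∑ i ∈ Finset.range n, y i)|
      ≤ E^2 * (n:ℝ)^2 * (3/2)^n := by
  induction n with
  | zero => simp
  | succ n ih =>
    have hS : |∑ i ∈ Finset.range n, y i| ≤ (n:ℝ) * E := by
      calc |∑ i ∈ Finset.range n, y i| ≤ ∑ i ∈ Finset.range n, |y i| :=
            Finset.abs_sum_le_sum_abs _ _
        _ ≤ ∑ _i ∈ Finset.range n, E := Finset.sum_le_sum fun i _ => hy i
        _ = (n:ℝ) * E := by simp [mul_comm]
    have key : ∏ i ∈ Finset.range (n+1), (1 + y i) - (1 + ∑ i ∈ Finset.range (n+1), y i)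
        = (∏ i ∈ Finset.range n, (1 + y i) - (1 + ∑ i ∈ Finset.range n, y i)) * (1 + y n)
          + y n * ∑ i ∈ Finset.range n, y i := by
      rw [Finset.prod_range_succ, Finset.sum_range_succ]; ring
    rw [key]
    have h1 : |(∏ i ∈ Finset.range n, (1 + y i) - (1 + ∑ i ∈ Finset.range n, y i)) * (1 + y n)|
        ≤ E^2 * (n:ℝ)^2 * (3/2)^n * (3/2) := by
      rw [abs_mul]
      have : |1 + y n| ≤ 3/2 := by
        have := abs_le.mp (hy n)
        rw [abs_le]; constructor <;> nlinarith
      exact mul_le_mul ih this (abs_nonneg _) (by positivity)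
    have h2 : |y n * ∑ i ∈ Finset.range n, y i| ≤ (n:ℝ) * E^2 := by
      rw [abs_mul]
      calc |y n| * |∑ i ∈ Finset.range n, y i| ≤ E * ((n:ℝ) * E) :=
            mul_le_mul (hy n) hS (abs_nonneg _) hE0
        _ = (n:ℝ) * E^2 := by ring
    calc |_ * (1 + y n) + y n * _| ≤ _ + _ := abs_add_le _ _
      _ ≤ E^2 * (n:ℝ)^2 * (3/2)^n * (3/2) + (n:ℝ) * E^2 := add_le_add h1 h2
      _ ≤ E^2 * ((n:ℝ)+1)^2 * (3/2)^(n+1) := by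
          have hpow : (1:ℝ) ≤ (3/2)^(n+1) := one_le_pow₀ (by norm_num)
          have hn : (n:ℝ) * E^2 ≤ (2*(n:ℝ)+1) * (3/2)^(n+1) * E^2 := by
            have h0 : (0:ℝ) ≤ (2*(n:ℝ)+1) * E^2 := by positivity
            nlinarith [mul_le_mul_of_nonneg_left hpow h0, sq_nonneg E,
              mul_nonneg (Nat.cast_nonneg n : (0:ℝ) ≤ n) (sq_nonneg E)]
          have : E^2 * (n:ℝ)^2 * (3/2)^n * (3/2) = E^2 * (n:ℝ)^2 * (3/2)^(n+1) := by
            rw [pow_succ]; ring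
          rw [this]; nlinarith [hn]
      _ = E^2 * ((n+1:ℕ):ℝ)^2 * (3/2)^(n+1) := by push_cast; ring

/-- Telescoping sum. -/
lemma hasSum_telescope (a f : ℕ → ℝ) (hf : ∀ n, f n = a n - a (n+1))
    (hsum : Summable f) (ha : Tendsto a atTop (𝓝 0)) : HasSum f (a 0) := by
  have hnorm : Summable fun i => ‖f i‖ := summable_norm_iff.mpr hsum
  rw [hasSum_iff_tendsto_nat_of_summable_norm hnorm]
  have hps : ∀ n, ∑ i ∈ Finset.range n, f i = a 0 - a n := by
    intro n
    calc ∑ i ∈ Finset.range n, f i = ∑ i ∈ Finset.range n, (a i - a (i+1)) := by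
          exact Finset.sum_congr rfl fun i _ => hf i
      _ = a 0 - a n := Finset.sum_range_sub' a n
  simp only [hps]
  have h2 : Tendsto (fun n => a 0 - a n) atTop (𝓝 (a 0 - 0)) :=
    (tendsto_const_nhds (x := a 0) (f := atTop)).sub ha
  simpa using h2

/-- Summability of polynomial times geometric. -/
lemma summable_poly_geo (k : ℕ) : Summable (fun n : ℕ => ((n:ℝ)+1)^k * (3/4)^n) := by
  have h : Summable (fun n : ℕ => (n:ℝ)^k * (3/4)^n) :=
    summable_pow_mul_geometric_of_norm_lt_one k
      (by rw [Real.norm_eq_abs, abs_of_nonneg (by norm_num)]; norm_num)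
  have h2 : Summable (fun n : ℕ => ((n+1:ℕ):ℝ)^k * (3/4)^(n+1)) :=
    (summable_nat_add_iff 1).mpr h
  have := h2.mul_left (4/3)
  refine this.congr fun n => ?_
  push_cast
  rw [pow_succ]
  ring

end Stmt15Aux

/-- The cookie transition operator `Q_ε`. -/
noncomputable def Qeps (ε : ℕ → ℝ) (f : ℕ → ℝ) (r : ℕ) : ℝ :=
  ∑' ℓ : ℕ, f (r + ℓ + 1) *
    ((2 : ℝ) ^ (-(ℓ + 1 : ℤ)) * (∏ i ∈ Finset.range ℓ, (1 + ε (r + i + 1)))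
      * (1 - ε (r + ℓ + 1)))

/-- The geometric(1/2) transition operator `Q_0`. -/
noncomputable def Q0 (f : ℕ → ℝ) (r : ℕ) : ℝ :=
  ∑' ℓ : ℕ, f (r + ℓ + 1) * (2 : ℝ) ^ (-(ℓ + 1 : ℤ))

/-- The linearized operator `R̃_ε`. -/
noncomputable def Rtilde (ε : ℕ → ℝ) (f : ℕ → ℝ) (r : ℕ) : ℝ :=
  ∑' ℓ : ℕ, f (r + ℓ + 1) * (2 : ℝ) ^ (-(ℓ + 1 : ℤ)) *
    (-ε (r + ℓ + 1) + ∑ i ∈ Finset.range ℓ, ε (r + i + 1))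

set_option maxHeartbeats 2000000 in
theorem stmt_15 :
    ∃ C : ℝ, 0 < C ∧
      ∀ ε : ℕ → ℝ, (∀ i, |ε i| ≤ 1 / 2) →
        ∀ f g : ℕ → ℝ, ∀ Kf Kg Mg : ℝ, 0 ≤ Kf → 0 ≤ Kg → 0 ≤ Mg →
          (∀ r r' : ℕ, |f r - f r'| ≤ Kf * |(r : ℝ) - r'|) →
          (∀ r r' : ℕ, |g r - g r'| ≤ Kg * |(r : ℝ) - r'|) →
          (∀ r : ℕ, |g r| ≤ Mg) →
          ∃ fε gε : ℕ → ℝ,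
            (∀ r : ℕ,
              (Qeps ε (fun r => f r + r * g r) r - Q0 (fun r => f r + r * g r) r)
                - Rtilde ε (fun r => f r + r * g r) r = fε r + r * gε r) ∧
            (∀ r : ℕ, |fε r| ≤ C * (Kf + Mg) * (⨆ j, |ε j|) ^ 2) ∧
            (∀ r : ℕ, |gε r| ≤ C * Kg * (⨆ j, |ε j|) ^ 2) := by
  classical
  set C0 : ℝ := ∑' n : ℕ, ((n:ℝ)+1)^3 * (3/4)^n with hC0def
  have hC0sum := Stmt15Aux.summable_poly_geo 3
  have hC0nonneg : 0 ≤ C0 := tsum_nonneg (fun n => by positivity)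
  refine ⟨C0 + 1, by linarith, ?_⟩
  intro ε hε f g Kf Kg Mg hKf hKg hMg hLf hLg hgM
  set E : ℝ := ⨆ j, |ε j| with hEdef
  have hbdd : BddAbove (Set.range fun j => |ε j|) := ⟨1/2, by rintro x ⟨j, rfl⟩; exact hε j⟩
  have hEb : ∀ i, |ε i| ≤ E := fun i => le_ciSup hbdd i
  have hE0 : 0 ≤ E := le_trans (abs_nonneg _) (hEb 0)
  have hE1 : E ≤ 1/2 := ciSup_le hε
  set hh : ℕ → ℝ := fun r => f r + r * g r with hhdef
  -- the weight
  have hw : ∀ ℓ : ℕ, (2:ℝ) ^ (-(ℓ + 1 : ℤ)) = (1/2:ℝ)^(ℓ+1) := by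
    intro ℓ
    rw [show (-(ℓ+1:ℤ)) = -((ℓ+1:ℕ):ℤ) by push_cast; ring, zpow_neg, zpow_natCast,
      one_div, inv_pow]
  -- notation
  set P : ℕ → ℕ → ℝ := fun r ℓ =>
    (∏ i ∈ Finset.range ℓ, (1 + ε (r+i+1))) * (1 - ε (r+ℓ+1)) with hPdef
  set L : ℕ → ℕ → ℝ := fun r ℓ =>
    -ε (r+ℓ+1) + ∑ i ∈ Finset.range ℓ, ε (r+i+1) with hLdef
  set u : ℕ → ℕ → ℝ := fun r ℓ => (1/2:ℝ)^(ℓ+1) * (P r ℓ - 1 - L r ℓ) with hudef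
  -- basic bounds
  have habs1 : ∀ j, |1 + ε j| ≤ 3/2 := fun j => by
    have := abs_le.mp (hε j); rw [abs_le]; constructor <;> linarith [this.1, this.2]
  have habs2 : ∀ j, |1 - ε j| ≤ 3/2 := fun j => by
    have := abs_le.mp (hε j); rw [abs_le]; constructor <;> linarith [this.1, this.2]
  have hprod : ∀ r ℓ, |∏ i ∈ Finset.range ℓ, (1 + ε (r+i+1))| ≤ (3/2:ℝ)^ℓ := by
    intro r ℓ
    rw [Finset.abs_prod]
    calc ∏ i ∈ Finset.range ℓ, |1 + ε (r+i+1)| ≤ ∏ _i ∈ Finset.range ℓ, (3/2:ℝ) :=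
          Finset.prod_le_prod (fun i _ => abs_nonneg _) (fun i _ => habs1 _)
      _ = (3/2:ℝ)^ℓ := by rw [Finset.prod_const, Finset.card_range]
  have hP : ∀ r ℓ, |P r ℓ| ≤ (3/2:ℝ)^(ℓ+1) := by
    intro r ℓ
    simp only [hPdef]
    calc |(∏ i ∈ Finset.range ℓ, (1 + ε (r+i+1))) * (1 - ε (r+ℓ+1))|
        = |∏ i ∈ Finset.range ℓ, (1 + ε (r+i+1))| * |1 - ε (r+ℓ+1)| := abs_mul _ _
      _ ≤ (3/2:ℝ)^ℓ * (3/2) := mul_le_mul (hprod r ℓ) (habs2 _) (abs_nonneg _) (by positivity)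
      _ = (3/2:ℝ)^(ℓ+1) := (pow_succ _ _).symm
  have hL : ∀ r ℓ, |L r ℓ| ≤ ((ℓ:ℝ)+1) := by
    intro r ℓ
    simp only [hLdef]
    have h1 : |∑ i ∈ Finset.range ℓ, ε (r+i+1)| ≤ (ℓ:ℝ) * (1/2) := by
      calc |∑ i ∈ Finset.range ℓ, ε (r+i+1)| ≤ ∑ i ∈ Finset.range ℓ, |ε (r+i+1)| :=
            Finset.abs_sum_le_sum_abs _ _
        _ ≤ ∑ _i ∈ Finset.range ℓ, (1/2:ℝ) := Finset.sum_le_sum fun i _ => hε _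
        _ = (ℓ:ℝ) * (1/2) := by simp [mul_comm]
    calc |-ε (r+ℓ+1) + ∑ i ∈ Finset.range ℓ, ε (r+i+1)|
        ≤ |-ε (r+ℓ+1)| + |∑ i ∈ Finset.range ℓ, ε (r+i+1)| := abs_add_le _ _
      _ ≤ 1/2 + (ℓ:ℝ) * (1/2) := by
          refine add_le_add ?_ h1
          rw [abs_neg]; exact hε _
      _ ≤ (ℓ:ℝ) + 1 := by nlinarith [(Nat.cast_nonneg ℓ : (0:ℝ) ≤ ℓ)]
  -- the quadratic bound on the error term
  have hdelta : ∀ r ℓ, |P r ℓ - 1 - L r ℓ| ≤ E^2 * ((ℓ:ℝ)+1)^2 * (3/2)^(ℓ+1) := by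
    intro r ℓ
    set y : ℕ → ℝ := fun i => if i < ℓ then ε (r+i+1) else -ε (r+ℓ+1) with hydef
    have hy : ∀ i, |y i| ≤ E := by
      intro i
      simp only [hydef]
      by_cases hi : i < ℓ <;> simp [hi, abs_neg, hEb]
    have hprodeq : ∏ i ∈ Finset.range (ℓ+1), (1 + y i) = P r ℓ := by
      rw [Finset.prod_range_succ]
      simp only [hPdef]
      congr 1
      · exact Finset.prod_congr rfl fun i hi => by
          simp [hydef, Finset.mem_range.mp hi]
      · simp only [hydef, lt_irrefl, if_neg (lt_irrefl ℓ)]; ring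
    have hsumeq : 1 + ∑ i ∈ Finset.range (ℓ+1), y i = 1 + L r ℓ := by
      rw [Finset.sum_range_succ]
      simp only [hLdef]
      have h5 : ∑ i ∈ Finset.range ℓ, y i = ∑ i ∈ Finset.range ℓ, ε (r+i+1) :=
        Finset.sum_congr rfl fun i hi => by simp [hydef, Finset.mem_range.mp hi]
      rw [h5]
      simp only [hydef, if_neg (lt_irrefl ℓ)]
      ring
    have hb := Stmt15Aux.prod_linearize_bound E hE0 hE1 y hy (ℓ+1)
    rw [hprodeq, hsumeq] at hb
    calc |P r ℓ - 1 - L r ℓ| = |P r ℓ - (1 + L r ℓ)| := by congr 1; ring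
      _ ≤ E^2 * ((ℓ+1:ℕ):ℝ)^2 * (3/2)^(ℓ+1) := hb
      _ = E^2 * ((ℓ:ℝ)+1)^2 * (3/2)^(ℓ+1) := by push_cast; ring
  have hu : ∀ r ℓ, |u r ℓ| ≤ E^2 * ((ℓ:ℝ)+1)^2 * (3/4)^(ℓ+1) := by
    intro r ℓ
    simp only [hudef]
    calc |(1/2:ℝ)^(ℓ+1) * (P r ℓ - 1 - L r ℓ)|
        = (1/2:ℝ)^(ℓ+1) * |P r ℓ - 1 - L r ℓ| := by
          rw [abs_mul, abs_of_nonneg (by positivity : (0:ℝ) ≤ (1/2:ℝ)^(ℓ+1))]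
      _ ≤ (1/2:ℝ)^(ℓ+1) * (E^2 * ((ℓ:ℝ)+1)^2 * (3/2)^(ℓ+1)) :=
          mul_le_mul_of_nonneg_left (hdelta r ℓ) (by positivity)
      _ = E^2 * ((ℓ:ℝ)+1)^2 * ((1/2:ℝ)*(3/2))^(ℓ+1) := by rw [mul_pow]; ring
      _ = E^2 * ((ℓ:ℝ)+1)^2 * (3/4)^(ℓ+1) := by norm_num
  -- auxiliary geometric facts
  have h34 : ∀ ℓ : ℕ, (3/4:ℝ)^(ℓ+1) ≤ (3/4:ℝ)^ℓ := by
    intro ℓ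
    rw [pow_succ]
    nlinarith [pow_nonneg (by norm_num : (0:ℝ) ≤ 3/4) ℓ]
  have h12le34 : ∀ ℓ : ℕ, (1/2:ℝ)^(ℓ+1) ≤ (3/4:ℝ)^ℓ := by
    intro ℓ
    calc (1/2:ℝ)^(ℓ+1) ≤ (1/2:ℝ)^ℓ := by
          rw [pow_succ]
          nlinarith [pow_nonneg (by norm_num : (0:ℝ) ≤ 1/2) ℓ]
      _ ≤ (3/4:ℝ)^ℓ := pow_le_pow_left₀ (by norm_num) (by norm_num) ℓ
  have geo34 : Summable (fun ℓ : ℕ => (3/4:ℝ)^(ℓ+1)) := by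
    have := (summable_geometric_of_lt_one (by norm_num : (0:ℝ) ≤ 3/4) (by norm_num)).mul_right (3/4)
    exact this.congr fun n => by rw [pow_succ]
  -- the three HasSum facts
  have S1 : ∀ r, HasSum (fun ℓ => (1/2:ℝ)^(ℓ+1) * P r ℓ) 1 := by
    intro r
    set a : ℕ → ℝ := fun ℓ => (1/2:ℝ)^ℓ * ∏ i ∈ Finset.range ℓ, (1 + ε (r+i+1)) with hadef
    have hf : ∀ ℓ, (1/2:ℝ)^(ℓ+1) * P r ℓ = a ℓ - a (ℓ+1) := by
      intro ℓ
      simp only [hadef, hPdef, Finset.prod_range_succ, pow_succ]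
      ring
    have habound : ∀ ℓ, ‖a ℓ‖ ≤ (3/4:ℝ)^ℓ := by
      intro ℓ
      simp only [hadef]
      rw [Real.norm_eq_abs, abs_mul, abs_of_nonneg (by positivity : (0:ℝ) ≤ (1/2:ℝ)^ℓ)]
      calc (1/2:ℝ)^ℓ * |∏ i ∈ Finset.range ℓ, (1 + ε (r+i+1))|
          ≤ (1/2:ℝ)^ℓ * (3/2)^ℓ := mul_le_mul_of_nonneg_left (hprod r ℓ) (by positivity)
        _ = ((1/2:ℝ)*(3/2))^ℓ := (mul_pow _ _ _).symm
        _ = (3/4:ℝ)^ℓ := by norm_num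
    have hsum : Summable (fun ℓ => (1/2:ℝ)^(ℓ+1) * P r ℓ) := by
      refine Summable.of_norm_bounded geo34 fun ℓ => ?_
      rw [Real.norm_eq_abs, abs_mul, abs_of_nonneg (by positivity : (0:ℝ) ≤ (1/2:ℝ)^(ℓ+1))]
      calc (1/2:ℝ)^(ℓ+1) * |P r ℓ| ≤ (1/2:ℝ)^(ℓ+1) * (3/2)^(ℓ+1) :=
            mul_le_mul_of_nonneg_left (hP r ℓ) (by positivity)
        _ = ((1/2:ℝ)*(3/2))^(ℓ+1) := (mul_pow _ _ _).symm
        _ = (3/4:ℝ)^(ℓ+1) := by norm_num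
    have ha : Tendsto a atTop (𝓝 0) :=
      squeeze_zero_norm habound
        (tendsto_pow_atTop_nhds_zero_of_lt_one (by norm_num) (by norm_num))
    have := Stmt15Aux.hasSum_telescope a _ hf hsum ha
    simpa [hadef] using this
  have S2 : HasSum (fun ℓ : ℕ => (1/2:ℝ)^(ℓ+1)) 1 := by
    have h1 := (hasSum_geometric_of_lt_one (by norm_num : (0:ℝ) ≤ 1/2) (by norm_num)).mul_right (1/2)
    have heq : (fun n : ℕ => (1/2:ℝ)^n * (1/2)) = fun n : ℕ => (1/2:ℝ)^(n+1) :=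
      funext fun n => (pow_succ _ _).symm
    rw [heq] at h1
    norm_num at h1
    exact h1
  have S3 : ∀ r, HasSum (fun ℓ => (1/2:ℝ)^(ℓ+1) * L r ℓ) 0 := by
    intro r
    set b : ℕ → ℝ := fun ℓ => (1/2:ℝ)^ℓ * ∑ i ∈ Finset.range ℓ, ε (r+i+1) with hbdef
    have hf : ∀ ℓ, (1/2:ℝ)^(ℓ+1) * L r ℓ = b ℓ - b (ℓ+1) := by
      intro ℓ
      simp only [hbdef, hLdef, Finset.sum_range_succ, pow_succ]
      ring
    have hbbound : ∀ ℓ, ‖b ℓ‖ ≤ (ℓ:ℝ) * (1/2:ℝ)^ℓ := by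
      intro ℓ
      simp only [hbdef]
      rw [Real.norm_eq_abs, abs_mul, abs_of_nonneg (by positivity : (0:ℝ) ≤ (1/2:ℝ)^ℓ)]
      have h1 : |∑ i ∈ Finset.range ℓ, ε (r+i+1)| ≤ (ℓ:ℝ) := by
        calc |∑ i ∈ Finset.range ℓ, ε (r+i+1)| ≤ ∑ i ∈ Finset.range ℓ, |ε (r+i+1)| :=
              Finset.abs_sum_le_sum_abs _ _
          _ ≤ ∑ _i ∈ Finset.range ℓ, (1:ℝ) := Finset.sum_le_sum fun i _ => by
              linarith [hε (r+i+1)]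
          _ = (ℓ:ℝ) := by simp
      calc (1/2:ℝ)^ℓ * |∑ i ∈ Finset.range ℓ, ε (r+i+1)| ≤ (1/2:ℝ)^ℓ * (ℓ:ℝ) :=
            mul_le_mul_of_nonneg_left h1 (by positivity)
        _ = (ℓ:ℝ) * (1/2:ℝ)^ℓ := mul_comm _ _
    have hsumb : Summable (fun ℓ : ℕ => (ℓ:ℝ) * (1/2:ℝ)^ℓ) := by
      have := summable_pow_mul_geometric_of_norm_lt_one (R := ℝ) 1
        (r := 1/2) (by rw [Real.norm_eq_abs, abs_of_nonneg (by norm_num)]; norm_num)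
      exact this.congr fun n => by rw [pow_one]
    have hb : Tendsto b atTop (𝓝 0) :=
      squeeze_zero_norm hbbound hsumb.tendsto_atTop_zero
    have hsum : Summable (fun ℓ => (1/2:ℝ)^(ℓ+1) * L r ℓ) := by
      have hmaster : Summable (fun ℓ : ℕ => ((ℓ:ℝ)+1) * (3/4:ℝ)^ℓ) := by
        have := Stmt15Aux.summable_poly_geo 1
        exact this.congr fun n => by rw [pow_one]
      refine Summable.of_norm_bounded hmaster fun ℓ => ?_
      rw [Real.norm_eq_abs, abs_mul, abs_of_nonneg (by positivity : (0:ℝ) ≤ (1/2:ℝ)^(ℓ+1))]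
      calc (1/2:ℝ)^(ℓ+1) * |L r ℓ| ≤ (3/4:ℝ)^ℓ * ((ℓ:ℝ)+1) :=
            mul_le_mul (h12le34 ℓ) (hL r ℓ) (abs_nonneg _) (by positivity)
        _ = ((ℓ:ℝ)+1) * (3/4:ℝ)^ℓ := mul_comm _ _
    have := Stmt15Aux.hasSum_telescope b _ hf hsum hb
    simpa [hbdef] using this
  have S0 : ∀ r, HasSum (fun ℓ => u r ℓ) 0 := by
    intro r
    have h1 := ((S1 r).sub S2).sub (S3 r)
    have heq : (fun ℓ => (1/2:ℝ)^(ℓ+1) * P r ℓ - (1/2:ℝ)^(ℓ+1) - (1/2:ℝ)^(ℓ+1) * L r ℓ)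
        = fun ℓ => u r ℓ := by
      funext ℓ; simp only [hudef]; ring
    rw [heq] at h1
    norm_num at h1
    exact h1
  -- summability of (weight) * u and the tsum bound
  have husum : ∀ (r : ℕ) (c : ℝ), 0 ≤ c →
      ∀ v : ℕ → ℝ, (∀ ℓ, |v ℓ| ≤ c * ((ℓ:ℝ)+1)) →
      Summable (fun ℓ => v ℓ * u r ℓ) ∧
        |∑' ℓ, v ℓ * u r ℓ| ≤ c * E^2 * C0 := by
    intro r c hc v hv
    have hbound : ∀ ℓ, ‖v ℓ * u r ℓ‖ ≤ c * E^2 * (((ℓ:ℝ)+1)^3 * (3/4)^ℓ) := by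
      intro ℓ
      rw [Real.norm_eq_abs, abs_mul]
      calc |v ℓ| * |u r ℓ| ≤ (c * ((ℓ:ℝ)+1)) * (E^2 * ((ℓ:ℝ)+1)^2 * (3/4)^(ℓ+1)) :=
            mul_le_mul (hv ℓ) (hu r ℓ) (abs_nonneg _) (by positivity)
        _ = c * E^2 * (((ℓ:ℝ)+1)^3 * (3/4)^(ℓ+1)) := by ring
        _ ≤ c * E^2 * (((ℓ:ℝ)+1)^3 * (3/4)^ℓ) := by
            refine mul_le_mul_of_nonneg_left ?_ (by positivity)
            exact mul_le_mul_of_nonneg_left (h34 ℓ) (by positivity)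
    have hgsum : HasSum (fun ℓ : ℕ => c * E^2 * (((ℓ:ℝ)+1)^3 * (3/4)^ℓ)) (c * E^2 * C0) :=
      hC0sum.hasSum.mul_left _
    exact ⟨Summable.of_norm_bounded hgsum.summable hbound,
      by rw [← Real.norm_eq_abs]; exact tsum_of_norm_bounded hgsum hbound⟩
  -- the coefficient sequences
  set Ff : ℕ → ℕ → ℝ := fun r ℓ => f (r+ℓ+1) - f r + ((ℓ:ℝ)+1) * g (r+ℓ+1) with hFfdef
  set Gg : ℕ → ℕ → ℝ := fun r ℓ => g (r+ℓ+1) - g r with hGgdef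
  have hcast : ∀ r ℓ : ℕ, |((r+ℓ+1:ℕ):ℝ) - ((r:ℕ):ℝ)| = (ℓ:ℝ)+1 := by
    intro r ℓ
    push_cast
    rw [show ((r:ℝ) + (ℓ:ℝ) + 1 - (r:ℝ)) = (ℓ:ℝ)+1 by ring]
    rw [abs_of_nonneg (by positivity)]
  have hFfb : ∀ r ℓ, |Ff r ℓ| ≤ (Kf + Mg) * ((ℓ:ℝ)+1) := by
    intro r ℓ
    simp only [hFfdef]
    have h1 : |f (r+ℓ+1) - f r| ≤ Kf * ((ℓ:ℝ)+1) := by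
      have := hLf (r+ℓ+1) r
      rwa [hcast r ℓ] at this
    have h2 : |((ℓ:ℝ)+1) * g (r+ℓ+1)| ≤ ((ℓ:ℝ)+1) * Mg := by
      rw [abs_mul, abs_of_nonneg (by positivity : (0:ℝ) ≤ (ℓ:ℝ)+1)]
      exact mul_le_mul_of_nonneg_left (hgM _) (by positivity)
    calc |f (r+ℓ+1) - f r + ((ℓ:ℝ)+1) * g (r+ℓ+1)|
        ≤ |f (r+ℓ+1) - f r| + |((ℓ:ℝ)+1) * g (r+ℓ+1)| := abs_add_le _ _
      _ ≤ Kf * ((ℓ:ℝ)+1) + ((ℓ:ℝ)+1) * Mg := add_le_add h1 h2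
      _ = (Kf + Mg) * ((ℓ:ℝ)+1) := by ring
  have hGgb : ∀ r ℓ, |Gg r ℓ| ≤ Kg * ((ℓ:ℝ)+1) := by
    intro r ℓ
    simp only [hGgdef]
    have := hLg (r+ℓ+1) r
    rwa [hcast r ℓ] at this
  refine ⟨fun r => ∑' ℓ, Ff r ℓ * u r ℓ, fun r => ∑' ℓ, Gg r ℓ * u r ℓ, ?_, ?_, ?_⟩
  · -- the identity
    intro r
    have hFsum := (husum r (Kf + Mg) (by linarith) (Ff r) (hFfb r)).1
    have hGsum := (husum r Kg hKg (Gg r) (hGgb r)).1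
    have hhbound : ∀ ℓ : ℕ, |hh (r+ℓ+1)| ≤ (|f r| + Kf + ((r:ℝ)+1)*Mg) * ((ℓ:ℝ)+1) := by
      intro ℓ
      simp only [hhdef]
      have h1 : |f (r+ℓ+1)| ≤ |f r| + Kf * ((ℓ:ℝ)+1) := by
        have h3 := hLf (r+ℓ+1) r
        rw [hcast r ℓ] at h3
        calc |f (r+ℓ+1)| = |f r + (f (r+ℓ+1) - f r)| := by ring_nf
          _ ≤ |f r| + |f (r+ℓ+1) - f r| := abs_add_le _ _
          _ ≤ |f r| + Kf * ((ℓ:ℝ)+1) := by linarith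
      have h2 : |((r+ℓ+1:ℕ):ℝ) * g (r+ℓ+1)| ≤ ((r:ℝ)+1) * ((ℓ:ℝ)+1) * Mg := by
        rw [abs_mul]
        have hc : |((r+ℓ+1:ℕ):ℝ)| = (r:ℝ)+(ℓ:ℝ)+1 := by
          push_cast
          rw [abs_of_nonneg (by positivity)]
        rw [hc]
        calc ((r:ℝ)+(ℓ:ℝ)+1) * |g (r+ℓ+1)| ≤ ((r:ℝ)+(ℓ:ℝ)+1) * Mg :=
              mul_le_mul_of_nonneg_left (hgM _) (by positivity)
          _ ≤ ((r:ℝ)+1) * ((ℓ:ℝ)+1) * Mg := by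
              refine mul_le_mul_of_nonneg_right ?_ hMg
              nlinarith [(Nat.cast_nonneg r : (0:ℝ) ≤ (r:ℝ)), (Nat.cast_nonneg ℓ : (0:ℝ) ≤ (ℓ:ℝ))]
      calc |f (r+ℓ+1) + ((r+ℓ+1:ℕ):ℝ) * g (r+ℓ+1)|
          ≤ |f (r+ℓ+1)| + |((r+ℓ+1:ℕ):ℝ) * g (r+ℓ+1)| := abs_add_le _ _
        _ ≤ |f r| + Kf * ((ℓ:ℝ)+1) + ((r:ℝ)+1) * ((ℓ:ℝ)+1) * Mg := add_le_add h1 h2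
        _ ≤ (|f r| + Kf + ((r:ℝ)+1)*Mg) * ((ℓ:ℝ)+1) := by
            nlinarith [(Nat.cast_nonneg ℓ : (0:ℝ) ≤ (ℓ:ℝ)), abs_nonneg (f r),
              mul_nonneg (by positivity : (0:ℝ) ≤ (r:ℝ)+1) hMg]
    set A : ℝ := |f r| + Kf + ((r:ℝ)+1)*Mg with hAdef
    have hmaster1 : Summable (fun ℓ : ℕ => A * (((ℓ:ℝ)+1) * (3/4:ℝ)^ℓ)) := by
      have h6 := (Stmt15Aux.summable_poly_geo 1).mul_left A
      exact h6.congr fun n => by rw [pow_one]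
    have hmaster2 : Summable (fun ℓ : ℕ => A * (((ℓ:ℝ)+1)^2 * (3/4:ℝ)^ℓ)) :=
      (Stmt15Aux.summable_poly_geo 2).mul_left A
    have hA0 : (0:ℝ) ≤ A := by rw [hAdef]; positivity
    have hQe : Summable (fun ℓ : ℕ => hh (r + ℓ + 1) *
        ((2 : ℝ) ^ (-(ℓ + 1 : ℤ)) * (∏ i ∈ Finset.range ℓ, (1 + ε (r + i + 1)))
          * (1 - ε (r + ℓ + 1)))) := by
      refine Summable.of_norm_bounded hmaster1 fun ℓ => ?_
      rw [Real.norm_eq_abs, abs_mul, hw]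
      have hq : |(1/2:ℝ)^(ℓ+1) * (∏ i ∈ Finset.range ℓ, (1 + ε (r+i+1))) * (1 - ε (r+ℓ+1))|
          ≤ (3/4:ℝ)^ℓ := by
        rw [abs_mul, abs_mul, abs_of_nonneg (by positivity : (0:ℝ) ≤ (1/2:ℝ)^(ℓ+1))]
        calc (1/2:ℝ)^(ℓ+1) * |∏ i ∈ Finset.range ℓ, (1 + ε (r+i+1))| * |1 - ε (r+ℓ+1)|
            ≤ (1/2:ℝ)^(ℓ+1) * (3/2)^ℓ * (3/2) :=
              mul_le_mul (mul_le_mul_of_nonneg_left (hprod r ℓ) (by positivity))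
                (habs2 _) (abs_nonneg _) (by positivity)
          _ = ((1/2:ℝ)*(3/2))^(ℓ+1) := by rw [mul_pow, pow_succ]; ring
          _ = (3/4:ℝ)^(ℓ+1) := by norm_num
          _ ≤ (3/4:ℝ)^ℓ := h34 ℓ
      calc |hh (r+ℓ+1)| * |(1/2:ℝ)^(ℓ+1) * (∏ i ∈ Finset.range ℓ, (1 + ε (r+i+1)))
            * (1 - ε (r+ℓ+1))|
          ≤ (A * ((ℓ:ℝ)+1)) * (3/4:ℝ)^ℓ :=
            mul_le_mul (hhbound ℓ) hq (abs_nonneg _) (by positivity)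
        _ = A * (((ℓ:ℝ)+1) * (3/4:ℝ)^ℓ) := by ring
    have hQ0 : Summable (fun ℓ : ℕ => hh (r + ℓ + 1) * (2 : ℝ) ^ (-(ℓ + 1 : ℤ))) := by
      refine Summable.of_norm_bounded hmaster1 fun ℓ => ?_
      rw [Real.norm_eq_abs, abs_mul, hw, abs_of_nonneg (by positivity : (0:ℝ) ≤ (1/2:ℝ)^(ℓ+1))]
      calc |hh (r+ℓ+1)| * (1/2:ℝ)^(ℓ+1) ≤ (A * ((ℓ:ℝ)+1)) * (3/4:ℝ)^ℓ :=
            mul_le_mul (hhbound ℓ) (h12le34 ℓ) (by positivity) (by positivity)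
        _ = A * (((ℓ:ℝ)+1) * (3/4:ℝ)^ℓ) := by ring
    have hRt : Summable (fun ℓ : ℕ => hh (r + ℓ + 1) * (2 : ℝ) ^ (-(ℓ + 1 : ℤ)) *
        (-ε (r + ℓ + 1) + ∑ i ∈ Finset.range ℓ, ε (r + i + 1))) := by
      refine Summable.of_norm_bounded hmaster2 fun ℓ => ?_
      rw [Real.norm_eq_abs, abs_mul, abs_mul, hw,
        abs_of_nonneg (by positivity : (0:ℝ) ≤ (1/2:ℝ)^(ℓ+1))]
      have hLL : |-ε (r+ℓ+1) + ∑ i ∈ Finset.range ℓ, ε (r+i+1)| ≤ ((ℓ:ℝ)+1) := hL r ℓ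
      calc |hh (r+ℓ+1)| * (1/2:ℝ)^(ℓ+1) * |-ε (r+ℓ+1) + ∑ i ∈ Finset.range ℓ, ε (r+i+1)|
          ≤ (A * ((ℓ:ℝ)+1)) * (3/4:ℝ)^ℓ * ((ℓ:ℝ)+1) := by
            refine mul_le_mul ?_ hLL (abs_nonneg _) (by positivity)
            exact mul_le_mul (hhbound ℓ) (h12le34 ℓ) (by positivity) (by positivity)
        _ = A * (((ℓ:ℝ)+1)^2 * (3/4:ℝ)^ℓ) := by ring
    have H1 : HasSum (fun ℓ : ℕ =>
        hh (r + ℓ + 1) * ((2 : ℝ) ^ (-(ℓ + 1 : ℤ)) * (∏ i ∈ Finset.range ℓ, (1 + ε (r + i + 1)))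
            * (1 - ε (r + ℓ + 1)))
          - hh (r + ℓ + 1) * (2 : ℝ) ^ (-(ℓ + 1 : ℤ))
          - hh (r + ℓ + 1) * (2 : ℝ) ^ (-(ℓ + 1 : ℤ)) *
              (-ε (r + ℓ + 1) + ∑ i ∈ Finset.range ℓ, ε (r + i + 1)))
        ((Qeps ε hh r - Q0 hh r) - Rtilde ε hh r) :=
      (hQe.hasSum.sub hQ0.hasSum).sub hRt.hasSum
    have H2 : HasSum (fun ℓ : ℕ =>
        hh (r + ℓ + 1) * ((2 : ℝ) ^ (-(ℓ + 1 : ℤ)) * (∏ i ∈ Finset.range ℓ, (1 + ε (r + i + 1)))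
            * (1 - ε (r + ℓ + 1)))
          - hh (r + ℓ + 1) * (2 : ℝ) ^ (-(ℓ + 1 : ℤ))
          - hh (r + ℓ + 1) * (2 : ℝ) ^ (-(ℓ + 1 : ℤ)) *
              (-ε (r + ℓ + 1) + ∑ i ∈ Finset.range ℓ, ε (r + i + 1)))
        ((∑' ℓ, Ff r ℓ * u r ℓ) + (((r:ℝ) * ∑' ℓ, Gg r ℓ * u r ℓ) + hh r * 0)) := by
      have h0 := hFsum.hasSum.add ((hGsum.hasSum.mul_left (r:ℝ)).add ((S0 r).mul_left (hh r)))
      have heq : (fun ℓ => Ff r ℓ * u r ℓ + ((r:ℝ) * (Gg r ℓ * u r ℓ) + hh r * u r ℓ))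
          = fun ℓ : ℕ =>
          hh (r + ℓ + 1) * ((2 : ℝ) ^ (-(ℓ + 1 : ℤ)) * (∏ i ∈ Finset.range ℓ, (1 + ε (r + i + 1)))
              * (1 - ε (r + ℓ + 1)))
            - hh (r + ℓ + 1) * (2 : ℝ) ^ (-(ℓ + 1 : ℤ))
            - hh (r + ℓ + 1) * (2 : ℝ) ^ (-(ℓ + 1 : ℤ)) *
                (-ε (r + ℓ + 1) + ∑ i ∈ Finset.range ℓ, ε (r + i + 1)) := by
        funext ℓ
        simp only [hFfdef, hGgdef, hudef, hPdef, hLdef, hhdef, hw]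
        push_cast
        ring
      rw [heq] at h0
      exact h0
    have hid := H1.unique H2
    rw [hid]
    simp only [mul_zero, add_zero]
  · -- bound for fε
    intro r
    have hb := (husum r (Kf + Mg) (by linarith) (Ff r) (hFfb r)).2
    have : (Kf + Mg) * E^2 * C0 ≤ (C0 + 1) * (Kf + Mg) * E^2 := by
      nlinarith [mul_nonneg (mul_nonneg (add_nonneg hKf hMg) (sq_nonneg E)) hC0nonneg,
        mul_nonneg (add_nonneg hKf hMg) (sq_nonneg E)]
    exact hb.trans this
  · -- bound for gε
    intro r
    have hb := (husum r Kg hKg (Gg r) (hGgb r)).2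
    have : Kg * E^2 * C0 ≤ (C0 + 1) * Kg * E^2 := by
      nlinarith [mul_nonneg (mul_nonneg hKg (sq_nonneg E)) hC0nonneg,
        mul_nonneg hKg (sq_nonneg E)]
    exact hb.trans this
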